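/- For all n ≥ 0, ∑_{k=0}^n js(n,k;z) y^k = ∏_{i=0}^{n-1} (y + i(z+i)) as polynomials in y and z. -/

import Mathlib

open Polynomial Finset

/-- The Jacobi-Stirling numbers of the first kind `js(n,k;z)`, as polynomials in `z`. -/
noncomputable def js : ℕ → ℕ → Polynomial ℤ
  | 0, 0 => 1
  | 0, _+1 => 0
  | _+1, 0 => 0
  | n+1, k+1 => js n k + (C (n : ℤ) * (C (n : ℤ) + X)) * js n (k+1)

lemma js_eq_zero : ∀ n k : ℕ, n < k → js n k = 0
  | 0, _+1, _ => rfl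
  | n+1, k+1, h => by
    have h1 : n < k := Nat.lt_of_succ_lt_succ h
    rw [js, js_eq_zero n k h1, js_eq_zero n (k+1) (h1.trans (Nat.lt_succ_self k))]
    simp

lemma js_zero_mul (n : ℕ) :
    (C (n : ℤ) * (C (n : ℤ) + X)) * js n 0 = 0 := by
  cases n with
  | zero => simp
  | succ m => rw [show js (m+1) 0 = 0 from rfl]; simp

/-- `∑_{k=0}^n js(n,k;z) y^k = ∏_{i=0}^{n-1} (y + i(z+i))`, as polynomials in `y`
with coefficients in `ℤ[z]`. -/
theorem sum_js_eq_prod (n : ℕ) :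
    ∑ k ∈ Finset.range (n + 1), C (js n k) * (X : Polynomial (Polynomial ℤ)) ^ k =
      ∏ i ∈ Finset.range n,
        ((X : Polynomial (Polynomial ℤ)) + C (C (i : ℤ) * (Polynomial.X + C (i : ℤ)))) := by
  induction n with
  | zero => simp [js]
  | succ n ih =>
    rw [Finset.prod_range_succ, ← ih]
    rw [Finset.sum_range_succ']
    have h0 : js (n+1) 0 = 0 := rfl
    rw [h0]
    have hrec : ∀ k : ℕ, js (n+1) (k+1)
        = js n k + (C (n : ℤ) * (C (n : ℤ) + X)) * js n (k+1) := fun k => rfl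
    simp only [hrec, map_add, map_mul, add_mul]
    rw [Finset.sum_add_distrib]
    have shift : ∑ k ∈ Finset.range (n+1), C (js n (k+1)) * (X : Polynomial (Polynomial ℤ)) ^ (k+1)
        = (∑ k ∈ Finset.range (n+1), C (js n k) * X ^ k) - C (js n 0) := by
      have h := Finset.sum_range_succ' (fun k => C (js n k) * (X : Polynomial (Polynomial ℤ)) ^ k) (n+1)
      rw [Finset.sum_range_succ, js_eq_zero n (n+1) (Nat.lt_succ_self n)] at h
      simp only [map_zero, zero_mul, add_zero, pow_zero, mul_one] at h
      linear_combination -h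
    have h1 : ∑ k ∈ Finset.range (n+1), C (js n k) * (X : Polynomial (Polynomial ℤ)) ^ (k+1)
        = X * ∑ k ∈ Finset.range (n+1), C (js n k) * X ^ k := by
      rw [Finset.mul_sum]
      exact Finset.sum_congr rfl fun k _ => by ring
    have h2 : ∑ k ∈ Finset.range (n+1),
        C (C ((n : ℕ) : ℤ)) * (C (C ((n : ℕ) : ℤ)) + C X) * C (js n (k+1)) * (X : Polynomial (Polynomial ℤ)) ^ (k+1)
        = C (C (n : ℤ) * (C (n : ℤ) + X)) *
          ∑ k ∈ Finset.range (n+1), C (js n k) * X ^ k := by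
      simp only [← map_add, ← map_mul]
      calc ∑ k ∈ Finset.range (n+1),
          C (C (n : ℤ) * (C (n : ℤ) + X) * js n (k+1)) * (X : Polynomial (Polynomial ℤ)) ^ (k+1)
          = C (C (n : ℤ) * (C (n : ℤ) + X)) *
            ∑ k ∈ Finset.range (n+1), C (js n (k+1)) * X ^ (k+1) := by
            rw [Finset.mul_sum]
            exact Finset.sum_congr rfl fun k _ => by rw [map_mul]; ring
        _ = C (C (n : ℤ) * (C (n : ℤ) + X)) *
            ((∑ k ∈ Finset.range (n+1), C (js n k) * X ^ k) - C (js n 0)) := by rw [shift]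
        _ = _ := by
            rw [mul_sub, ← map_mul, js_zero_mul n, map_zero, sub_zero]
    rw [h1, h2]
    simp only [map_zero, map_add, map_mul, zero_mul, add_zero]
    ring
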